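/- A T₀ space X is T₁ if and only if every neighborhood filter N(x) = {U open : x ∈ U} is a regular filter of the frame of open sets, i.e., N(x) = {U : U ∪ V = X} for some open V. -/
import Mathlib


open TopologicalSpace

/-- A T₀ space `X` is T₁ iff every neighborhood filter `N(x) = {U open | x ∈ U}` is a
regular filter of the frame of opens, i.e. `N(x) = {U | U ∪ V = X}` for some open `V`. -/
theorem stmt8 {X : Type*} [TopologicalSpace X] [T0Space X] :
    T1Space X ↔
      ∀ x : X, ∃ V : Opens X,
        {U : Opens X | x ∈ U} = {U : Opens X | U ⊔ V = ⊤} := by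
  constructor
  · intro h x
    refine ⟨⟨{x}ᶜ, isOpen_compl_singleton⟩, ?_⟩
    ext U
    simp only [Set.mem_setOf_eq]
    constructor
    · intro hx
      apply Opens.ext
      simp only [Opens.coe_sup, Opens.coe_top]
      rw [Set.eq_univ_iff_forall]
      intro y
      rcases eq_or_ne y x with rfl | h'
      · exact Or.inl hx
      · exact Or.inr h'
    · intro hU
      have hx : x ∈ ((U ⊔ ⟨{x}ᶜ, isOpen_compl_singleton⟩ : Opens X) : Set X) := by
        rw [hU]; trivial
      rcases hx with h | h
      · exact h
      · exact absurd rfl h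
  · intro h
    refine ⟨fun x => ?_⟩
    obtain ⟨V, hV⟩ := h x
    have hmem : ∀ U : Opens X, x ∈ U ↔ U ⊔ V = ⊤ := fun U => Set.ext_iff.mp hV U
    have hVne : V ≠ ⊤ := by
      intro hVt
      have : x ∈ (⊥ : Opens X) := (hmem ⊥).mpr (by rw [hVt, sup_top_eq])
      exact this
    have hxV : x ∉ V := by
      intro hx
      exact hVne (by simpa using (hmem V).mp hx)
    -- auxiliary: for any point z with its own witness W, z ∉ W
    have notself : ∀ z : X, ∀ W : Opens X,
        (∀ U : Opens X, z ∈ U ↔ U ⊔ W = ⊤) → z ∉ W := by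
      intro z W hm hz
      have hWt : W = ⊤ := by simpa using (hm W).mp hz
      have : z ∈ (⊥ : Opens X) := (hm ⊥).mpr (by rw [hWt, sup_top_eq])
      exact this
    have hcompl : ({x}ᶜ : Set X) = (V : Set X) := by
      ext y
      simp only [Set.mem_compl_iff, Set.mem_singleton_iff]
      constructor
      · intro hy
        by_contra hyV
        obtain ⟨W, hW⟩ := h y
        have hmemy : ∀ U : Opens X, y ∈ U ↔ U ⊔ W = ⊤ := fun U => Set.ext_iff.mp hW U
        have hxW : x ∉ W := by
          intro hxW
          have hsup : W ⊔ V = ⊤ := (hmem W).mp hxW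
          have : y ∈ ((W ⊔ V : Opens X) : Set X) := by rw [hsup]; trivial
          rcases this with h' | h'
          · exact notself y W hmemy h'
          · exact hyV h'
        have hins : Inseparable x y := by
          rw [inseparable_iff_forall_isOpen]
          intro s hs
          constructor
          · intro hxs
            have hsup : (⟨s, hs⟩ : Opens X) ⊔ V = ⊤ := (hmem ⟨s, hs⟩).mp hxs
            have : y ∈ (((⟨s, hs⟩ : Opens X) ⊔ V : Opens X) : Set X) := by rw [hsup]; trivial
            rcases this with h' | h'
            · exact h'
            · exact absurd h' hyV
          · intro hys
            have hsup : (⟨s, hs⟩ : Opens X) ⊔ W = ⊤ := (hmemy ⟨s, hs⟩).mp hys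
            have : x ∈ (((⟨s, hs⟩ : Opens X) ⊔ W : Opens X) : Set X) := by rw [hsup]; trivial
            rcases this with h' | h'
            · exact h'
            · exact absurd h' hxW
        exact hy (hins.eq.symm)
      · intro hyV heq
        exact hxV (heq ▸ hyV)
    have : IsOpen ({x}ᶜ : Set X) := hcompl ▸ V.isOpen
    exact isOpen_compl_iff.mp this
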